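/- Let K ⊆ ℍ^n be compact and let w ∈ ℍ^n with w ∉ convexHull ℝ K. Then there exist ζ ∈ ℍ^n and c ∈ ℝ such that the function f(z) := exp((Σ_{l=1}^n z_l · star(ζ_l)) − c) satisfies ‖f(z)‖ < 1 for every z ∈ K and ‖f(w)‖ = 1. -/

import Mathlib

noncomputable section

open scoped RealInnerProductSpace

open Finset in
lemma aux_sum_dite {M : Type*} [AddCommMonoid M] {c m : ℕ} (hcm : c ≤ m) (G : Fin c → M) :
    (∑ i : Fin m, if h : (i : ℕ) < c then G ⟨i, h⟩ else 0) = ∑ j, G j := by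
  rw [Fin.sum_univ_eq_sum_range (fun i => if h : i < c then G ⟨i, h⟩ else 0) m,
    ← Finset.sum_subset (Finset.range_subset_range.mpr hcm)
      (fun i _ hi => dif_neg (by simpa using hi)),
    ← Fin.sum_univ_eq_sum_range (fun i => if h : i < c then G ⟨i, h⟩ else 0) c]
  exact Finset.sum_congr rfl fun i _ => by rw [dif_pos i.isLt]

lemma aux_sum_equivFin {α : Type*} {M : Type*} [AddCommMonoid M] (t : Finset α) (F : α → M) :
    (∑ j, F (t.equivFin.symm j)) = ∑ y ∈ t, F y := by
  rw [← Finset.sum_coe_sort t F, ← Equiv.sum_comp t.equivFin.symm (fun a : t => F a)]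

open Finset in
/-- In a finite-dimensional real normed space, the convex hull of a compact set is compact. -/
lemma aux_isCompact_convexHull {E : Type*} [NormedAddCommGroup E] [NormedSpace ℝ E]
    [FiniteDimensional ℝ E] {K : Set E} (hK : IsCompact K) :
    IsCompact (convexHull ℝ K) := by
  rcases K.eq_empty_or_nonempty with rfl | ⟨x₀, hx₀⟩
  · simp
  set m : ℕ := Module.finrank ℝ E + 1 with hm
  set g : (Fin m → ℝ) × (Fin m → E) → E := fun p => ∑ i, p.1 i • p.2 i with hg
  have hgc : Continuous g := by
    apply continuous_finset_sum
    intro i _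
    exact ((continuous_apply i).comp continuous_fst).smul
      ((continuous_apply i).comp continuous_snd)
  set T : Set ((Fin m → ℝ) × (Fin m → E)) :=
    (stdSimplex ℝ (Fin m)) ×ˢ Set.univ.pi (fun _ => K) with hT
  have hTc : IsCompact T := (isCompact_stdSimplex _ _).prod (isCompact_univ_pi fun _ => hK)
  have himg : convexHull ℝ K = g '' T := by
    apply Set.Subset.antisymm
    · intro x hx
      rw [convexHull_eq_union] at hx
      simp only [Set.mem_iUnion, exists_prop] at hx
      obtain ⟨t, hts, hai, hxt⟩ := hx
      have hcard : t.card ≤ m := by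
        have h1 := hai.card_le_finrank_succ
        rw [Fintype.card_coe] at h1
        exact h1.trans (by
          have := Submodule.finrank_le (vectorSpan ℝ (Set.range ((↑) : t → E)))
          omega)
      rw [t.convexHull_eq] at hxt
      obtain ⟨w, hw0, hw1, hwx⟩ := hxt
      set e : Fin t.card → E := fun j => (t.equivFin.symm j : E) with he
      have het : ∀ j, e j ∈ t := fun j => (t.equivFin.symm j).2
      set ws : ℕ → ℝ := fun i => if h : i < t.card then w (e ⟨i, h⟩) else 0 with hws
      set xs : ℕ → E := fun i => if h : i < t.card then e ⟨i, h⟩ else x₀ with hxs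
      refine ⟨(fun i => ws i, fun i => xs i), ⟨?_, ?_⟩, ?_⟩
      · refine ⟨fun i => ?_, ?_⟩
        · simp only [hws]
          split
          · exact hw0 _ (het _)
          · exact le_refl 0
        · have : (fun i : Fin m => ws i) =
              fun i : Fin m => if h : (i : ℕ) < t.card then w (e ⟨i, h⟩) else 0 := rfl
          rw [this, aux_sum_dite hcard (fun j => w (e j)), he, aux_sum_equivFin t w, hw1]
      · intro i _
        simp only [hxs]
        split
        · exact hts (het _)
        · exact hx₀
      · simp only [hg]
        have : (fun i : Fin m => ws i • xs i) =
            fun i : Fin m => if h : (i : ℕ) < t.card then w (e ⟨i, h⟩) • e ⟨i, h⟩ else 0 := by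
          funext i
          simp only [hws, hxs]
          split <;> simp
        rw [this, aux_sum_dite hcard (fun j => w (e j) • e j), he, aux_sum_equivFin t (fun y => w y • y)]
        rw [Finset.centerMass_eq_of_sum_1 _ _ hw1] at hwx
        simpa using hwx
    · rintro _ ⟨⟨ω, x⟩, ⟨⟨hω0, hω1⟩, hx⟩, rfl⟩
      exact (convex_convexHull ℝ K).sum_mem (fun i _ => hω0 i) hω1
        (fun i _ => subset_convexHull ℝ K (hx i trivial))
  rw [himg]
  exact hTc.image hgc

/-- Part of the proof of Proposition 2.18 (part I): if `K ⊆ ℍ^n` is compact and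
`w ∉ convexHull ℝ K`, then there are `ζ ∈ ℍ^n` and `c ∈ ℝ` such that the entire function
`f(z) = exp((∑ l, z l * star (ζ l)) − c)` satisfies `‖f z‖ < 1` on `K` and `‖f w‖ = 1`. -/
theorem exists_exp_separating {n : ℕ} (K : Set (Fin n → Quaternion ℝ)) (hK : IsCompact K)
    (w : Fin n → Quaternion ℝ) (hw : w ∉ convexHull ℝ K) :
    ∃ (ζ : Fin n → Quaternion ℝ) (c : ℝ),
      (∀ z ∈ K, ‖NormedSpace.exp ((∑ l, z l * star (ζ l)) - (c : Quaternion ℝ))‖ < 1) ∧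
      ‖NormedSpace.exp ((∑ l, w l * star (ζ l)) - (c : Quaternion ℝ))‖ = 1 := by
  have hcomp : IsCompact (convexHull ℝ K) := aux_isCompact_convexHull hK
  obtain ⟨f, u, hfs, hfw⟩ := geometric_hahn_banach_closed_point
    (convex_convexHull ℝ K) hcomp.isClosed hw
  set ζ : Fin n → Quaternion ℝ := fun l =>
    (InnerProductSpace.toDual ℝ (Quaternion ℝ)).symm
      ((f.toLinearMap.comp
        (LinearMap.single ℝ (fun _ : Fin n => Quaternion ℝ) l)).toContinuousLinearMap)
    with hζ
  have hrep : ∀ z : Fin n → Quaternion ℝ,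
      (∑ l, z l * star (ζ l)).re = f z := by
    intro z
    have hz : ∀ l, (z l * star (ζ l)).re = f (Pi.single l (z l)) := by
      intro l
      have h1 : ⟪ζ l, z l⟫ = f (Pi.single l (z l)) := by
        simp [hζ, InnerProductSpace.toDual_symm_apply, LinearMap.single]
        rfl
      rw [← h1, real_inner_comm, Quaternion.inner_def]
    have hsingle : z = ∑ l, Pi.single l (z l) := by
      simp [Finset.univ_sum_single]
    calc (∑ l, z l * star (ζ l)).re = ∑ l, (z l * star (ζ l)).re :=
          map_sum (QuaternionAlgebra.reₗ _ _ _) _ _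
      _ = ∑ l, f (Pi.single l (z l)) := by simp [hz]
      _ = f z := by rw [← map_sum, ← hsingle]
  refine ⟨ζ, f w, ?_, ?_⟩
  · intro z hz
    have hlt : f z < f w := (hfs z (subset_convexHull ℝ K hz)).trans hfw
    have hre : ((∑ l, z l * star (ζ l)) - ((f w : ℝ) : Quaternion ℝ)).re = f z - f w := by
      simp [Quaternion.re_sub, hrep]
    rw [Quaternion.norm_exp, hre, ← Real.exp_eq_exp_ℝ]
    rw [Real.norm_eq_abs, abs_of_pos (Real.exp_pos _)]
    exact Real.exp_lt_one_iff.mpr (by linarith)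
  · have hre : ((∑ l, w l * star (ζ l)) - ((f w : ℝ) : Quaternion ℝ)).re = 0 := by
      simp [Quaternion.re_sub, hrep]
    rw [Quaternion.norm_exp, hre, ← Real.exp_eq_exp_ℝ]
    simp
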